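/- Let K be an n×n symmetric positive semi-definite matrix written as K = A + B where A and B are symmetric positive semi-definite, with eigenvalues of K, A, B denoted λ_i, α_i, β_i in decreasing order. Then the tail sum satisfies ∑_{s > T} λ_s ≤ ∑_{s > ⌊T/2⌋} (α_{⌊s/2⌋} + β_{⌊s/2⌋}) for any T with the indices in range. -/

import Mathlib

/-- The eigenvalues of a Hermitian matrix, listed in decreasing order (with multiplicity). -/
noncomputable def eigDesc {𝕜 : Type*} [RCLike 𝕜] {n : ℕ} {A : Matrix (Fin n) (Fin n) 𝕜}
    (hA : A.IsHermitian) : Fin n → ℝ :=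
  fun i => hA.eigenvalues (Tuple.sort hA.eigenvalues i.rev)

/-- A finite decreasing eigenvalue list, 1-indexed and extended by zero outside `{1, …, n}`. -/
noncomputable def extSeq {n : ℕ} (f : Fin n → ℝ) : ℕ → ℝ :=
  fun s => if h : 1 ≤ s ∧ s ≤ n then f ⟨s - 1, by omega⟩ else 0

open RealInnerProductSpace

namespace TailAux

variable {n : ℕ}

/-- The eigenvector basis reindexed so that eigenvalues are decreasing. -/
noncomputable def descBasis {A : Matrix (Fin n) (Fin n) ℝ} (hA : A.IsHermitian) :
    OrthonormalBasis (Fin n) ℝ (EuclideanSpace ℝ (Fin n)) :=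
  hA.eigenvectorBasis.reindex ((Fin.revPerm.trans (Tuple.sort hA.eigenvalues)).symm)

lemma descBasis_apply {A : Matrix (Fin n) (Fin n) ℝ} (hA : A.IsHermitian) (i : Fin n) :
    descBasis hA i = hA.eigenvectorBasis (Tuple.sort hA.eigenvalues i.rev) := by
  simp [descBasis, OrthonormalBasis.reindex_apply, Fin.revPerm]

lemma eigen_descBasis {A : Matrix (Fin n) (Fin n) ℝ} (hA : A.IsHermitian) (i : Fin n) :
    Matrix.toEuclideanLin A (descBasis hA i) = eigDesc hA i • descBasis hA i := by
  rw [descBasis_apply]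
  show Matrix.toEuclideanLin A (hA.eigenvectorBasis _) =
    hA.eigenvalues _ • hA.eigenvectorBasis _
  apply WithLp.ofLp_injective 2
  simp only [Matrix.ofLp_toEuclideanLin_apply, WithLp.ofLp_smul]
  exact hA.mulVec_eigenvectorBasis _

lemma eigDesc_antitone {A : Matrix (Fin n) (Fin n) ℝ} (hA : A.IsHermitian) :
    Antitone (eigDesc hA) := fun i j h =>
  Tuple.monotone_sort hA.eigenvalues (Fin.rev_le_rev.2 h)

lemma coeff_eq_zero (b : OrthonormalBasis (Fin n) ℝ (EuclideanSpace ℝ (Fin n)))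
    (S : Finset (Fin n)) {x : EuclideanSpace ℝ (Fin n)}
    (hx : x ∈ Submodule.span ℝ (⇑b '' ↑S)) {i : Fin n} (hi : i ∉ S) : ⟪b i, x⟫ = 0 := by
  induction hx using Submodule.span_induction with
  | mem y hy =>
      obtain ⟨j, hj, rfl⟩ := hy
      exact b.orthonormal.2 (fun h => hi (h ▸ hj))
  | zero => simp
  | add y z hy hz ihy ihz => simp [inner_add_right, ihy, ihz]
  | smul a y hy ih => simp [inner_smul_right, ih]

lemma inner_map_le (b : OrthonormalBasis (Fin n) ℝ (EuclideanSpace ℝ (Fin n)))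
    (f : EuclideanSpace ℝ (Fin n) →ₗ[ℝ] EuclideanSpace ℝ (Fin n)) (μ : Fin n → ℝ)
    (hb : ∀ i, f (b i) = μ i • b i) (S : Finset (Fin n)) (c : ℝ)
    (hc : ∀ i ∈ S, μ i ≤ c) (x : EuclideanSpace ℝ (Fin n))
    (hx : x ∈ Submodule.span ℝ (⇑b '' ↑S)) :
    ⟪x, f x⟫ ≤ c * ⟪x, x⟫ := by
  set l : Fin n → ℝ := fun i => b.repr x i with hl
  have hx' : x = ∑ i, l i • b i := (b.sum_repr x).symm
  have hfx : f x = ∑ i, (l i * μ i) • b i := by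
    conv_lhs => rw [hx']
    rw [map_sum]
    simp [map_smul, hb, smul_smul]
  have h1 : ⟪x, f x⟫ = ∑ i, l i * (l i * μ i) := by
    conv_lhs => rw [hfx, hx']
    simpa using b.orthonormal.inner_sum l (fun i => l i * μ i) Finset.univ
  have h2 : ⟪x, x⟫ = ∑ i, l i * l i := by
    conv_lhs => rw [hx']
    simpa using b.orthonormal.inner_sum l l Finset.univ
  have hzero : ∀ i ∉ S, l i = 0 := by
    intro i hi
    rw [hl]
    simp only [b.repr_apply_apply]
    exact coeff_eq_zero b S hx hi
  rw [h1, h2, Finset.mul_sum]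
  apply Finset.sum_le_sum
  intro i _
  by_cases hi : i ∈ S
  · have := hc i hi
    nlinarith [mul_self_nonneg (l i)]
  · simp [hzero i hi]

lemma le_inner_map (b : OrthonormalBasis (Fin n) ℝ (EuclideanSpace ℝ (Fin n)))
    (f : EuclideanSpace ℝ (Fin n) →ₗ[ℝ] EuclideanSpace ℝ (Fin n)) (μ : Fin n → ℝ)
    (hb : ∀ i, f (b i) = μ i • b i) (S : Finset (Fin n)) (c : ℝ)
    (hc : ∀ i ∈ S, c ≤ μ i) (x : EuclideanSpace ℝ (Fin n))
    (hx : x ∈ Submodule.span ℝ (⇑b '' ↑S)) :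
    c * ⟪x, x⟫ ≤ ⟪x, f x⟫ := by
  have h := inner_map_le b (-f) (-μ) (by intro i; simp [hb]) S (-c)
    (by intro i hi; simpa using hc i hi) x hx
  simp only [LinearMap.neg_apply, inner_neg_right, neg_mul] at h
  linarith

lemma finrank_span_image (b : OrthonormalBasis (Fin n) ℝ (EuclideanSpace ℝ (Fin n)))
    (S : Finset (Fin n)) :
    Module.finrank ℝ (Submodule.span ℝ (⇑b '' ↑S)) = S.card := by
  have himg : ⇑b '' ↑S = Set.range (fun i : ↑(S : Set (Fin n)) => b i) :=
    Set.image_eq_range _ _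
  rw [himg]
  have li : LinearIndependent ℝ (fun i : ↑(S : Set (Fin n)) => b i) :=
    (b.orthonormal.linearIndependent).comp _ Subtype.val_injective
  rw [finrank_span_eq_card li]
  simp

lemma exists_triple (U V W : Submodule ℝ (EuclideanSpace ℝ (Fin n)))
    (h : 2 * n + 1 ≤ Module.finrank ℝ U + Module.finrank ℝ V + Module.finrank ℝ W) :
    ∃ x : EuclideanSpace ℝ (Fin n), x ∈ U ∧ x ∈ V ∧ x ∈ W ∧ x ≠ 0 := by
  have hn : Module.finrank ℝ (EuclideanSpace ℝ (Fin n)) = n := finrank_euclideanSpace_fin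
  have key : ∀ U' V' : Submodule ℝ (EuclideanSpace ℝ (Fin n)),
      Module.finrank ℝ U' + Module.finrank ℝ V' ≤ n + Module.finrank ℝ ↥(U' ⊓ V') := by
    intro U' V'
    have e1 := Submodule.finrank_sup_add_finrank_inf_eq U' V'
    have e2 := Submodule.finrank_le (U' ⊔ V')
    rw [hn] at e2
    omega
  have h1 := key U V
  have h2 := key (U ⊓ V) W
  have hpos : 0 < Module.finrank ℝ ↥((U ⊓ V) ⊓ W) := by omega
  haveI : Nontrivial ↥((U ⊓ V) ⊓ W) := Module.finrank_pos_iff.mp hpos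
  obtain ⟨y, hy⟩ := exists_ne (0 : ↥((U ⊓ V) ⊓ W))
  refine ⟨(y : EuclideanSpace ℝ (Fin n)), y.2.1.1, y.2.1.2, y.2.2, ?_⟩
  simpa [Submodule.coe_eq_zero] using hy

theorem weyl {A B : Matrix (Fin n) (Fin n) ℝ} (hA : A.IsHermitian) (hB : B.IsHermitian)
    (hK : (A + B).IsHermitian) (p q r : Fin n) (h : (q : ℕ) + (r : ℕ) ≤ (p : ℕ)) :
    eigDesc hK p ≤ eigDesc hA q + eigDesc hB r := by
  obtain ⟨x, hU, hV, hW, hx0⟩ := exists_triple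
    (Submodule.span ℝ (⇑(descBasis hK) '' ↑(Finset.Iic p)))
    (Submodule.span ℝ (⇑(descBasis hA) '' ↑(Finset.Ici q)))
    (Submodule.span ℝ (⇑(descBasis hB) '' ↑(Finset.Ici r)))
    (by
      rw [finrank_span_image, finrank_span_image, finrank_span_image,
        Fin.card_Iic, Fin.card_Ici, Fin.card_Ici]
      have hp := p.isLt
      have hq := q.isLt
      have hr := r.isLt
      omega)
  have hpos : 0 < ⟪x, x⟫ := by
    rw [real_inner_self_eq_norm_sq]
    have : 0 < ‖x‖ := norm_pos_iff.mpr hx0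
    positivity
  have hKx : eigDesc hK p * ⟪x, x⟫ ≤ ⟪x, Matrix.toEuclideanLin (A + B) x⟫ :=
    le_inner_map (descBasis hK) _ _ (eigen_descBasis hK) (Finset.Iic p) _
      (fun i hi => eigDesc_antitone hK (Finset.mem_Iic.1 hi)) x hU
  have hAx : ⟪x, Matrix.toEuclideanLin A x⟫ ≤ eigDesc hA q * ⟪x, x⟫ :=
    inner_map_le (descBasis hA) _ _ (eigen_descBasis hA) (Finset.Ici q) _
      (fun i hi => eigDesc_antitone hA (Finset.mem_Ici.1 hi)) x hV
  have hBx : ⟪x, Matrix.toEuclideanLin B x⟫ ≤ eigDesc hB r * ⟪x, x⟫ :=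
    inner_map_le (descBasis hB) _ _ (eigen_descBasis hB) (Finset.Ici r) _
      (fun i hi => eigDesc_antitone hB (Finset.mem_Ici.1 hi)) x hW
  have hsum : ⟪x, Matrix.toEuclideanLin (A + B) x⟫ =
      ⟪x, Matrix.toEuclideanLin A x⟫ + ⟪x, Matrix.toEuclideanLin B x⟫ := by
    rw [map_add, LinearMap.add_apply, inner_add_right]
  have hfinal : eigDesc hK p * ⟪x, x⟫ ≤ (eigDesc hA q + eigDesc hB r) * ⟪x, x⟫ := by
    rw [add_mul]; linarith
  exact le_of_mul_le_mul_right hfinal hpos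

lemma extSeq_nonneg {A : Matrix (Fin n) (Fin n) ℝ} (hA : A.PosSemidef) (s : ℕ) :
    0 ≤ extSeq (eigDesc hA.1) s := by
  unfold extSeq
  split
  · exact hA.eigenvalues_nonneg _
  · exact le_refl 0

end TailAux

/-- Tail sums of eigenvalues of `K = A + B` (all symmetric PSD) are bounded by tail sums of the
halved-index eigenvalue sequences of `A` and `B`: for any `T` with the indices in range,
`∑_{s > T} λ_s ≤ ∑_{s > ⌊T/2⌋} (α_{⌊s/2⌋} + β_{⌊s/2⌋})`. -/
theorem tail_sum_eigenvalues_le {n : ℕ} (A B : Matrix (Fin n) (Fin n) ℝ)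
    (hA : A.PosSemidef) (hB : B.PosSemidef) (hK : (A + B).PosSemidef)
    (T : ℕ) (hT : 2 ≤ T) :
    ∑ s ∈ Finset.Icc (T + 1) n, extSeq (eigDesc hK.1) s ≤
      ∑ s ∈ Finset.Icc (T / 2 + 1) (2 * n + 1),
        (extSeq (eigDesc hA.1) (s / 2) + extSeq (eigDesc hB.1) (s / 2)) := by
  have step : ∀ s, 1 ≤ s → s ≤ n →
      extSeq (eigDesc hK.1) s ≤
        extSeq (eigDesc hA.1) ((s + 1) / 2) + extSeq (eigDesc hB.1) ((s + 1) / 2) := by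
    intro s h1 h2
    set k := (s + 1) / 2 with hk
    have hk1 : 1 ≤ k := by omega
    have hk2 : k ≤ n := by omega
    have hkn : k - 1 < n := by omega
    have hsn : s - 1 < n := by omega
    have hskn : s - k < n := by omega
    unfold extSeq
    rw [dif_pos ⟨h1, h2⟩, dif_pos ⟨hk1, hk2⟩, dif_pos ⟨hk1, hk2⟩]
    have hw := TailAux.weyl hA.1 hB.1 hK.1 ⟨s - 1, hsn⟩ ⟨k - 1, hkn⟩ ⟨s - k, hskn⟩
      (by simp; omega)
    have hmono : eigDesc hB.1 ⟨s - k, hskn⟩ ≤ eigDesc hB.1 ⟨k - 1, hkn⟩ :=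
      TailAux.eigDesc_antitone hB.1 (by simp [Fin.le_def]; omega)
    calc eigDesc hK.1 ⟨s - 1, hsn⟩
        ≤ eigDesc hA.1 ⟨k - 1, hkn⟩ + eigDesc hB.1 ⟨s - k, hskn⟩ := hw
      _ ≤ eigDesc hA.1 ⟨k - 1, hkn⟩ + eigDesc hB.1 ⟨k - 1, hkn⟩ := by linarith
  calc ∑ s ∈ Finset.Icc (T + 1) n, extSeq (eigDesc hK.1) s
      ≤ ∑ s ∈ Finset.Icc (T + 1) n,
          (extSeq (eigDesc hA.1) ((s + 1) / 2) + extSeq (eigDesc hB.1) ((s + 1) / 2)) := by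
        apply Finset.sum_le_sum
        intro s hs
        rw [Finset.mem_Icc] at hs
        exact step s (by omega) hs.2
    _ = ∑ s ∈ (Finset.Icc (T + 1) n).image (· + 1),
          (extSeq (eigDesc hA.1) (s / 2) + extSeq (eigDesc hB.1) (s / 2)) := by
        rw [Finset.sum_image (by intros a _ b _ h; simp only at h; omega)]
    _ ≤ ∑ s ∈ Finset.Icc (T / 2 + 1) (2 * n + 1),
          (extSeq (eigDesc hA.1) (s / 2) + extSeq (eigDesc hB.1) (s / 2)) := by
        apply Finset.sum_le_sum_of_subset_of_nonneg
        · intro s' hs'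
          simp only [Finset.mem_image, Finset.mem_Icc] at hs' ⊢
          obtain ⟨a, ⟨ha1, ha2⟩, rfl⟩ := hs'
          omega
        · intro i _ _
          exact add_nonneg (TailAux.extSeq_nonneg hA _) (TailAux.extSeq_nonneg hB _)
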